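/- arXiv:2206.04997 — 3 statements merged into one kernel-verified Lean document; each statement's English description precedes it below -/
import Mathlib

section
/- Let θ ∈ (0, π/2) and E > 0. On the domain D = {(u, w) ∈ ℝ² : w² ≤ 2E}, define the cross-wall collision map Ψ(u, w) = ( −w − (u − √(2E − w²))·cot θ , √(2E − w²) ). Then (u, w) ∈ D is a fixed point of Ψ if and only if u = √E · (cot θ − 1)/(cot θ + 1) and w = √E. -/
open Real

theorem fixedPoint_GB (θ E : ℝ) (hθ : θ ∈ Set.Ioo 0 (π / 2)) (hE : 0 < E)
    (u w : ℝ) (hD : w ^ 2 ≤ 2 * E) :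
    ((-w - (u - Real.sqrt (2 * E - w ^ 2)) * Real.cot θ,
        Real.sqrt (2 * E - w ^ 2)) : ℝ × ℝ) = (u, w) ↔
      u = Real.sqrt E * ((Real.cot θ - 1) / (Real.cot θ + 1)) ∧ w = Real.sqrt E := by
  obtain ⟨hθ0, hθ2⟩ := hθ
  have hc : 0 < Real.cot θ := by
    rw [Real.cot_eq_cos_div_sin]
    exact div_pos (Real.cos_pos_of_mem_Ioo ⟨by linarith [Real.pi_pos], hθ2⟩)
      (Real.sin_pos_of_pos_of_lt_pi hθ0 (by linarith [Real.pi_pos]))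
  have hc1 : Real.cot θ + 1 ≠ 0 := by linarith
  constructor
  · rintro h
    rw [Prod.mk.injEq] at h
    obtain ⟨h1, h2⟩ := h
    have hw0 : 0 ≤ w := h2 ▸ Real.sqrt_nonneg _
    have hsq : 2 * E - w ^ 2 = w ^ 2 := by
      have := Real.sq_sqrt (by linarith : (0:ℝ) ≤ 2 * E - w ^ 2)
      rw [h2] at this; linarith
    have hwE : w ^ 2 = E := by linarith
    have hw : w = Real.sqrt E := by
      rw [← hwE, Real.sqrt_sq hw0]
    refine ⟨?_, hw⟩
    rw [h2] at h1
    have : u * (Real.cot θ + 1) = w * (Real.cot θ - 1) := by ring_nf; linarith [h1]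
    rw [hw] at this
    field_simp
    linarith [this]
  · rintro ⟨hu, hw⟩
    have hEw : 2 * E - w ^ 2 = E := by
      rw [hw, Real.sq_sqrt hE.le]; ring
    have hsE : Real.sqrt (2 * E - w ^ 2) = w := by rw [hEw, hw]
    rw [Prod.ext_iff]
    refine ⟨?_, hsE⟩
    rw [hsE]
    simp only [hu, hw]
    field_simp
    ring
end

section
/- Let θ ∈ (0, π/2), u₀ > 0, w₀ > 0, T_A = u₀/cos θ, T_B = w₀/sin θ, and suppose T_A/T_B is irrational. Let f : ℝ → ℝ be the 2T_A-periodic function with f(t) = t·u₀ − t²·cos(θ)/2 on [0, 2T_A], and let g : ℝ → ℝ be the 2T_B-periodic function with g(t) = t·w₀ − t²·sin(θ)/2 on [0, 2T_B]. Then the set {(f(t), g(t)) : t ∈ ℝ} is dense in the rectangle [0, u₀²/(2cos θ)] × [0, w₀²/(2sin θ)]. -/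
open Real

/-- A periodic function agreeing with a continuous function on a fundamental
interval (with matching endpoints) is given by a continuous function. -/
lemma periodic_eq_continuous {p : ℝ} [hfact : Fact (0 < p)] (hp : 0 < p) {f q : ℝ → ℝ}
    (hper : Function.Periodic f p) (hf : ∀ t ∈ Set.Icc (0 : ℝ) p, f t = q t)
    (hq : Continuous q) (hq0 : q 0 = q p) :
    ∃ F : ℝ → ℝ, Continuous F ∧ ∀ t, f t = F t := by
  refine ⟨(AddCircle.liftIco p 0 q) ∘ (fun t => (t : AddCircle p)),
    (AddCircle.liftIco_zero_continuous hq0 hq.continuousOn).comp continuous_quotient_mk',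
    fun t => ?_⟩
  have hmem := toIcoMod_mem_Ico' hp t
  have h1 : f t = q (toIcoMod hp 0 t) := by
    rw [← hf _ (Set.Ico_subset_Icc_self hmem)]
    conv_lhs => rw [← toIcoMod_add_toIcoDiv_zsmul hp 0 t]
    exact (hper.zsmul (toIcoDiv hp 0 t)) (toIcoMod hp 0 t)
  have h2 : ((t : ℝ) : AddCircle p) = ((toIcoMod hp 0 t : ℝ) : AddCircle p) := by
    symm
    rw [QuotientAddGroup.eq]
    refine AddSubgroup.mem_zmultiples_iff.mpr ⟨toIcoDiv hp 0 t, ?_⟩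
    linarith [self_sub_toIcoMod hp 0 t]
  simp only [Function.comp_apply, h2, h1]
  rw [AddCircle.liftIco_zero_coe_apply hmem]

theorem dense_trajectory (θ u₀ w₀ T_A T_B : ℝ) (hθ : θ ∈ Set.Ioo 0 (π / 2))
    (hu₀ : 0 < u₀) (hw₀ : 0 < w₀)
    (hTA : T_A = u₀ / Real.cos θ) (hTB : T_B = w₀ / Real.sin θ)
    (hirr : Irrational (T_A / T_B))
    (f g : ℝ → ℝ)
    (hfper : Function.Periodic f (2 * T_A))
    (hf : ∀ t ∈ Set.Icc (0 : ℝ) (2 * T_A), f t = t * u₀ - t ^ 2 * Real.cos θ / 2)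
    (hgper : Function.Periodic g (2 * T_B))
    (hg : ∀ t ∈ Set.Icc (0 : ℝ) (2 * T_B), g t = t * w₀ - t ^ 2 * Real.sin θ / 2) :
    Set.Icc (0 : ℝ) (u₀ ^ 2 / (2 * Real.cos θ)) ×ˢ
        Set.Icc (0 : ℝ) (w₀ ^ 2 / (2 * Real.sin θ)) ⊆
      closure {p : ℝ × ℝ | ∃ t : ℝ, (f t, g t) = p} := by
  obtain ⟨hθ0, hθ2⟩ := hθ
  have hπ := Real.pi_pos
  have hc : 0 < Real.cos θ := Real.cos_pos_of_mem_Ioo ⟨by linarith, hθ2⟩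
  have hs : 0 < Real.sin θ := Real.sin_pos_of_pos_of_lt_pi hθ0 (by linarith)
  have hTApos : 0 < T_A := hTA ▸ div_pos hu₀ hc
  have hTBpos : 0 < T_B := hTB ▸ div_pos hw₀ hs
  set P : ℝ → ℝ := fun t => t * u₀ - t ^ 2 * Real.cos θ / 2 with hPdef
  set Q : ℝ → ℝ := fun t => t * w₀ - t ^ 2 * Real.sin θ / 2 with hQdef
  have hPcont : Continuous P := by fun_prop
  have hQcont : Continuous Q := by fun_prop
  have hP0 : P 0 = 0 := by simp [hPdef]
  have hQ0 : Q 0 = 0 := by simp [hQdef]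
  have hPT : P T_A = u₀ ^ 2 / (2 * Real.cos θ) := by
    simp only [hPdef, hTA]
    field_simp
    ring
  have hQT : Q T_B = w₀ ^ 2 / (2 * Real.sin θ) := by
    simp only [hQdef, hTB]
    field_simp
    ring
  have hP2T : P (2 * T_A) = 0 := by
    simp only [hPdef, hTA]
    field_simp
    ring
  have hQ2T : Q (2 * T_B) = 0 := by
    simp only [hQdef, hTB]
    field_simp
    ring
  haveI : Fact ((0:ℝ) < 2 * T_A) := ⟨by linarith⟩
  haveI : Fact ((0:ℝ) < 2 * T_B) := ⟨by linarith⟩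
  obtain ⟨F, hFc, hfF⟩ := periodic_eq_continuous (by linarith : (0:ℝ) < 2 * T_A)
    hfper hf hPcont (hP0.trans hP2T.symm)
  obtain ⟨G, hGc, hgG⟩ := periodic_eq_continuous (by linarith : (0:ℝ) < 2 * T_B)
    hgper hg hQcont (hQ0.trans hQ2T.symm)
  -- Density of the subgroup generated by the two periods
  set S₀ : AddSubgroup ℝ :=
    AddSubgroup.zmultiples (2 * T_A) ⊔ AddSubgroup.zmultiples (2 * T_B) with hS₀
  have hdense : Dense (S₀ : Set ℝ) := by
    rcases AddSubgroup.dense_or_cyclic S₀ with h | ⟨c, hc'⟩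
    · exact h
    · exfalso
      have hA : (2 * T_A) ∈ S₀ :=
        SetLike.le_def.mp le_sup_left (AddSubgroup.mem_zmultiples _)
      have hB : (2 * T_B) ∈ S₀ :=
        SetLike.le_def.mp le_sup_right (AddSubgroup.mem_zmultiples _)
      rw [hc', AddSubgroup.mem_closure_singleton] at hA hB
      obtain ⟨m, hm⟩ := hA
      obtain ⟨n, hn⟩ := hB
      have hc0 : c ≠ 0 := by
        rintro rfl
        simp only [smul_zero] at hm
        linarith
      have key : T_A / T_B = (m : ℝ) / (n : ℝ) := by
        have h2 : T_A / T_B = (2 * T_A) / (2 * T_B) :=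
          (mul_div_mul_left _ _ two_ne_zero).symm
        rw [h2, ← hm, ← hn, zsmul_eq_mul, zsmul_eq_mul,
          mul_div_mul_right _ _ hc0]
      rw [key] at hirr
      exact Rat.not_irrational ((m : ℚ) / (n : ℚ))
        (by rwa [Rat.cast_div, Rat.cast_intCast, Rat.cast_intCast])
  rintro ⟨x, y⟩ ⟨hx, hy⟩
  -- find preimages inside the fundamental intervals
  obtain ⟨s, hsmem, hPs⟩ :=
    intermediate_value_Icc hTApos.le hPcont.continuousOn (by rw [hP0, hPT]; exact hx)
  obtain ⟨r, hrmem, hQr⟩ :=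
    intermediate_value_Icc hTBpos.le hQcont.continuousOn (by rw [hQ0, hQT]; exact hy)
  have hfs : f s = x := by
    rw [hf s ⟨hsmem.1, by linarith [hsmem.2]⟩]; exact hPs
  have hgr : g r = y := by
    rw [hg r ⟨hrmem.1, by linarith [hrmem.2]⟩]; exact hQr
  rw [Metric.mem_closure_iff]
  intro ε hε
  obtain ⟨δ, hδ, hδimp⟩ := Metric.continuous_iff.mp hGc r ε hε
  obtain ⟨z, hzS, hzd⟩ := Metric.mem_closure_iff.mp (hdense (r - s)) δ hδ
  obtain ⟨a, ha, b, hb, hab⟩ := AddSubgroup.mem_sup.mp hzS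
  obtain ⟨m, hm⟩ := AddSubgroup.mem_zmultiples_iff.mp ha
  obtain ⟨n, hn⟩ := AddSubgroup.mem_zmultiples_iff.mp hb
  set t := s + m • (2 * T_A) with ht
  refine ⟨(f t, g t), ⟨t, rfl⟩, ?_⟩
  have hft : f t = x := by rw [ht, (hfper.zsmul m) s, hfs]
  have hgt : dist (g t) y < ε := by
    have h1 : g t = g (s + z) := by
      have : s + z = t + n • (2 * T_B) := by
        rw [ht, ← hab, ← hm, ← hn]; ring
      rw [this, (hgper.zsmul n) t]
    have h2 : dist (s + z) r < δ := by
      rw [Real.dist_eq] at hzd ⊢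
      rw [abs_sub_comm] at hzd
      convert hzd using 2
      ring
    have h3 := hδimp (s + z) h2
    rw [← hgG, ← hgG, ← h1, hgr] at h3
    exact h3
  rw [dist_comm] at hgt
  calc dist (x, y) (f t, g t) = max (dist x (f t)) (dist y (g t)) := Prod.dist_eq
    _ < ε := by rw [hft, dist_self]; exact max_lt hε hgt
end

section
/- Let θ ∈ (0, π/2), u₀ > 0, w₀ > 0, T_A = u₀/cos θ, T_B = w₀/sin θ, and suppose T_A/T_B = p/q for positive coprime natural numbers p, q. Let f be the 2T_A-periodic function equal to t·u₀ − t²·cos(θ)/2 on [0, 2T_A] and g the 2T_B-periodic extension of t·w₀ − t²·sin(θ)/2 on [0, 2T_B]. Then over one period (0, 2p·T_A], the set {t ∈ (0, 2p·T_A] : f(t) = 0} has exactly p elements and the set {t ∈ (0, 2q·T_B] : g(t) = 0} has exactly q elements; i.e., the periodic orbit has exactly p collisions on the wall ∂Q_A and exactly q collisions on the wall ∂Q_B per period, for a total period of p + q collisions. -/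
open Real

lemma aux_zero_count (T c : ℝ) (hT : 0 < T) (hc : 0 < c) (p : ℕ) (hp : 0 < p)
    (f : ℝ → ℝ) (hper : Function.Periodic f (2 * T))
    (hf : ∀ t ∈ Set.Icc (0 : ℝ) (2 * T), f t = c * t * (2 * T - t)) :
    {t : ℝ | t ∈ Set.Ioc 0 (2 * (p : ℝ) * T) ∧ f t = 0}.ncard = p := by
  have h2T : (0 : ℝ) < 2 * T := by linarith
  have hset : {t : ℝ | t ∈ Set.Ioc 0 (2 * (p : ℝ) * T) ∧ f t = 0}
      = (fun k : ℕ => 2 * T * (k : ℝ)) '' Set.Icc 1 p := by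
    ext t
    simp only [Set.mem_setOf_eq, Set.mem_Ioc, Set.mem_image, Set.mem_Icc]
    constructor
    · rintro ⟨⟨ht0, htp⟩, hft⟩
      set x := t / (2 * T) with hx
      have hx0 : 0 < x := div_pos ht0 h2T
      set k := ⌈x⌉₊ with hk
      have hk1 : 1 ≤ k := Nat.one_le_ceil_iff.mpr hx0
      have hkp : k ≤ p := by
        apply Nat.ceil_le.mpr
        rw [hx, div_le_iff₀ h2T]
        nlinarith
      have hlow : ((k - 1 : ℕ) : ℝ) < x := Nat.lt_ceil.mp (Nat.sub_lt hk1 one_pos)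
      have hhigh : x ≤ (k : ℝ) := Nat.le_ceil x
      have hcast : ((k - 1 : ℕ) : ℝ) = (k : ℝ) - 1 := by
        push_cast [Nat.cast_sub hk1]; ring
      have hs0 : ((k : ℝ) - 1) * (2 * T) < t := by
        rw [hx, lt_div_iff₀ h2T] at hlow
        linarith [hcast ▸ hlow]
      have hs1 : t ≤ (k : ℝ) * (2 * T) := by
        rw [hx, div_le_iff₀ h2T] at hhigh
        linarith
      have hper' := hper.sub_nat_mul_eq (x := t) (k - 1)
      set s := t - ((k - 1 : ℕ) : ℝ) * (2 * T) with hsdef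
      have hs0' : 0 < s := by rw [hsdef, hcast]; linarith
      have hs1' : s ≤ 2 * T := by rw [hsdef, hcast]; linarith
      have hfs : f s = 0 := by rw [hsdef, hper', hft]
      have := hf s ⟨le_of_lt hs0', hs1'⟩
      rw [this] at hfs
      have hs2T : s = 2 * T := by
        rcases mul_eq_zero.mp hfs with h | h
        · rcases mul_eq_zero.mp h with h' | h'
          · exact absurd h' (ne_of_gt hc)
          · exact absurd h' (ne_of_gt hs0')
        · linarith
      refine ⟨k, ⟨hk1, hkp⟩, ?_⟩
      have ht2 : t = ((k - 1 : ℕ) : ℝ) * (2 * T) + 2 * T := by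
        have h1 : s = t - ((k - 1 : ℕ) : ℝ) * (2 * T) := hsdef
        linarith
      rw [hcast] at ht2
      linarith
    · rintro ⟨k, ⟨hk1, hkp⟩, rfl⟩
      have hk1' : (1 : ℝ) ≤ (k : ℝ) := by exact_mod_cast hk1
      have hkp' : (k : ℝ) ≤ (p : ℝ) := by exact_mod_cast hkp
      refine ⟨⟨by nlinarith, by nlinarith⟩, ?_⟩
      have hper' := hper.sub_nat_mul_eq (x := 2 * T * (k : ℝ)) (k - 1)
      have hcast : ((k - 1 : ℕ) : ℝ) = (k : ℝ) - 1 := by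
        push_cast [Nat.cast_sub hk1]; ring
      have harg : 2 * T * (k : ℝ) - ((k - 1 : ℕ) : ℝ) * (2 * T) = 2 * T := by
        rw [hcast]; ring
      rw [← hper', harg, hf (2 * T) ⟨le_of_lt h2T, le_refl _⟩]
      ring
  rw [hset]
  rw [Set.ncard_image_of_injOn]
  · rw [← Finset.coe_Icc, Set.ncard_coe_finset, Nat.card_Icc]; omega
  · intro a _ b _ hab
    have := mul_left_cancel₀ (ne_of_gt h2T) hab
    exact_mod_cast this

theorem collision_counts_per_period (θ u₀ w₀ T_A T_B : ℝ) (p q : ℕ)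
    (hθ : θ ∈ Set.Ioo 0 (π / 2))
    (hu₀ : 0 < u₀) (hw₀ : 0 < w₀)
    (hTA : T_A = u₀ / Real.cos θ) (hTB : T_B = w₀ / Real.sin θ)
    (hp : 0 < p) (hq : 0 < q) (hpq : Nat.Coprime p q)
    (hratio : T_A / T_B = (p : ℝ) / q)
    (f g : ℝ → ℝ)
    (hfper : Function.Periodic f (2 * T_A))
    (hf : ∀ t ∈ Set.Icc (0 : ℝ) (2 * T_A), f t = t * u₀ - t ^ 2 * Real.cos θ / 2)
    (hgper : Function.Periodic g (2 * T_B))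
    (hg : ∀ t ∈ Set.Icc (0 : ℝ) (2 * T_B), g t = t * w₀ - t ^ 2 * Real.sin θ / 2) :
    {t : ℝ | t ∈ Set.Ioc 0 (2 * (p : ℝ) * T_A) ∧ f t = 0}.ncard = p ∧
    {t : ℝ | t ∈ Set.Ioc 0 (2 * (q : ℝ) * T_B) ∧ g t = 0}.ncard = q := by
  obtain ⟨hθ0, hθ1⟩ := hθ
  have hcos : 0 < Real.cos θ := Real.cos_pos_of_mem_Ioo ⟨by linarith [Real.pi_pos], hθ1⟩
  have hsin : 0 < Real.sin θ := Real.sin_pos_of_pos_of_lt_pi hθ0 (by linarith [Real.pi_pos])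
  have hTA0 : 0 < T_A := by rw [hTA]; positivity
  have hTB0 : 0 < T_B := by rw [hTB]; positivity
  have hu : u₀ = T_A * Real.cos θ := by
    rw [hTA]; field_simp
  have hw : w₀ = T_B * Real.sin θ := by
    rw [hTB]; field_simp
  constructor
  · apply aux_zero_count T_A (Real.cos θ / 2) hTA0 (by linarith) p hp f hfper
    intro t ht
    rw [hf t ht, hu]; ring
  · apply aux_zero_count T_B (Real.sin θ / 2) hTB0 (by linarith) q hq g hgper
    intro t ht
    rw [hg t ht, hw]; ring
end
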